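/- Let (L, Δ) be an objective partial group with Δ a set of subgroups of S ∈ Δ, and let w = (g₁,…,gₙ) ∈ W(L). Define S_w as the set of x ∈ S such that for each k ≤ n the composite conjugation c_{g₁}∘⋯∘c_{g_k} is defined at x and maps x into S. Then S_w is a subgroup of S, and S_w ∈ Δ if and only if w ∈ D. -/

import Mathlib

universe u

structure PartialGroupOn (L : Type u) : Type u where
  nonempty : Nonempty L
  D : Set (List L)
  Pi : List L → L
  inv : L → L
  mem_single : ∀ x : L, [x] ∈ D
  mem_append_left : ∀ u v : List L, u ++ v ∈ D → u ∈ D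
  mem_append_right : ∀ u v : List L, u ++ v ∈ D → v ∈ D
  Pi_single : ∀ x : L, Pi [x] = x
  mem_assoc : ∀ u v w : List L, u ++ v ++ w ∈ D → u ++ [Pi v] ++ w ∈ D
  Pi_assoc : ∀ u v w : List L, u ++ v ++ w ∈ D →
    Pi (u ++ v ++ w) = Pi (u ++ [Pi v] ++ w)
  inv_inv : ∀ x : L, inv (inv x) = x
  mem_inv : ∀ w ∈ D, (w.reverse.map inv) ++ w ∈ D
  Pi_inv : ∀ w ∈ D, Pi ((w.reverse.map inv) ++ w) = Pi []

namespace PartialGroupOn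

variable {L : Type u} (M : PartialGroupOn L)

/-- The inverse of a word: reverse the word and invert each entry. -/
def wordInv (w : List L) : List L := w.reverse.map M.inv

/-- The identity element `1 = Π(∅)`. -/
def one : L := M.Pi []

/-- Conjugation `x ↦ x^g = Π(g⁻¹, x, g)`. -/
def conj (x g : L) : L := M.Pi [M.inv g, x, g]

/-- `D(g)` is the set of `x` for which `x^g` is defined. -/
def Dg (g : L) : Set L := {x | [M.inv g, x, g] ∈ M.D}

/-- A partial subgroup: a nonempty subset closed under inversion and under the
product applied to words in `D` with entries in the subset. -/
def IsPartialSubgroup (H : Set L) : Prop :=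
  H.Nonempty ∧ (∀ x ∈ H, M.inv x ∈ H) ∧
    ∀ w : List L, (∀ x ∈ w, x ∈ H) → w ∈ M.D → M.Pi w ∈ H

/-- A partial normal subgroup of `L`. -/
def IsPartialNormal (N : Set L) : Prop :=
  M.IsPartialSubgroup N ∧
    ∀ x ∈ N, ∀ g : L, [M.inv g, x, g] ∈ M.D → M.conj x g ∈ N

/-- A subgroup of `L`: a partial subgroup `H` with `W(H) ⊆ D`. -/
def IsSubgroup (H : Set L) : Prop :=
  M.IsPartialSubgroup H ∧ ∀ w : List L, (∀ x ∈ w, x ∈ H) → w ∈ M.D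

/-- `X ⊆ D(g)`, i.e. `X^g` is defined. -/
def setConjDef (X : Set L) (g : L) : Prop := ∀ x ∈ X, [M.inv g, x, g] ∈ M.D

/-- The conjugate set `X^g`. -/
def setConj (X : Set L) (g : L) : Set L := {y | ∃ x ∈ X, y = M.conj x g}

/-- `viaChain Δ w X` says that `w = (g₁,…,gₙ)` is in `D` via the chain
`X = X₀, X₁ = X₀^{g₁}, …` of members of `Δ`. -/
def viaChain (Δ : Set (Set L)) : List L → Set L → Prop
  | [], X => X ∈ Δ
  | g :: w, X => X ∈ Δ ∧ M.setConjDef X g ∧ viaChain Δ w (M.setConj X g)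

/-- `(L, Δ)` is an objective partial group: every member of `Δ` is a subgroup,
(O1) `D = D_Δ`, and (O2) the overgroup-closure condition. -/
def Objective (Δ : Set (Set L)) : Prop :=
  (∀ X ∈ Δ, M.IsSubgroup X) ∧
  (M.D = {w | ∃ X : Set L, M.viaChain Δ w X}) ∧
  (∀ X ∈ Δ, ∀ Y ∈ Δ, ∀ g : L, M.setConjDef X g → M.IsSubgroup (M.setConj X g) →
    M.setConj X g ⊆ Y →
    ∀ Z : Set L, M.IsSubgroup Z → M.setConj X g ⊆ Z → Z ⊆ Y → Z ∈ Δ)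

/-- The normalizer `N_L(X) = {g : X^g = X}`. -/
def normalizer (X : Set L) : Set L := {g | M.setConjDef X g ∧ M.setConj X g = X}

/-- `S_g = {x ∈ D(g) ∩ S : x^g ∈ S}`. -/
def Sg (S : Set L) (g : L) : Set L :=
  {x | x ∈ S ∧ [M.inv g, x, g] ∈ M.D ∧ M.conj x g ∈ S}

/-- `S_w`: the set of `x ∈ S` successively conjugated into `S` by the entries
of the word `w`. -/
def Sw (S : Set L) : List L → Set L
  | [] => S
  | g :: w => {x | x ∈ S ∧ [M.inv g, x, g] ∈ M.D ∧ M.conj x g ∈ Sw S w}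

/-- A `p`-subgroup: a subgroup whose cardinality is a power of `p`. -/
def IsPSubgroup (p : ℕ) (H : Set L) : Prop :=
  M.IsSubgroup H ∧ ∃ n : ℕ, Nat.card H = p ^ n

/-- `(L, Δ, S)` is a locality. -/
def IsLocality (p : ℕ) (Δ : Set (Set L)) (S : Set L) : Prop :=
  p.Prime ∧ Finite L ∧ S ∈ Δ ∧ (∀ X ∈ Δ, X ⊆ S) ∧ M.Objective Δ ∧
    M.IsPSubgroup p S ∧
    ∀ H : Set L, M.IsPSubgroup p H → S ⊆ H → H = S

/-- The product set `XY` of two subsets of `L`. -/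
def setProd (X Y : Set L) : Set L :=
  {z | ∃ a ∈ X, ∃ b ∈ Y, [a, b] ∈ M.D ∧ z = M.Pi [a, b]}

/-- A homomorphism of partial groups. -/
def IsHom {L' : Type u} (M' : PartialGroupOn L') (β : L → L') : Prop :=
  (∀ w ∈ M.D, w.map β ∈ M'.D) ∧ ∀ w ∈ M.D, β (M.Pi w) = M'.Pi (w.map β)

end PartialGroupOn

open PartialGroupOn

variable {L : Type u}


namespace PartialGroupOn

variable {L : Type u} (M : PartialGroupOn L)

lemma nil_mem : ([] : List L) ∈ M.D := by
  obtain ⟨x⟩ := M.nonempty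
  exact M.mem_append_left [] [x] (M.mem_single x)

lemma inv_pair_mem (x : L) : [M.inv x, x] ∈ M.D := M.mem_inv [x] (M.mem_single x)

lemma Pi_inv_pair (x : L) : M.Pi [M.inv x, x] = M.one := M.Pi_inv [x] (M.mem_single x)

lemma pair_inv_mem (x : L) : [x, M.inv x] ∈ M.D := by
  have := M.inv_pair_mem (M.inv x); rwa [M.inv_inv] at this

lemma Pi_pair_inv (x : L) : M.Pi [x, M.inv x] = M.one := by
  have := M.Pi_inv_pair (M.inv x); rwa [M.inv_inv] at this

lemma one_mul_mem (x : L) : [M.one, x] ∈ M.D :=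
  M.mem_assoc [] [] [x] (M.mem_single x)

lemma Pi_one_mul (x : L) : M.Pi [M.one, x] = x := by
  have := M.Pi_assoc [] [] [x] (M.mem_single x)
  try simp only [List.cons_append, List.nil_append, List.append_nil] at this
  rw [M.Pi_single] at this
  exact this.symm

lemma mul_one_mem (x : L) : [x, M.one] ∈ M.D := by
  have := M.mem_assoc [x] [] [] (show [x] ++ [] ++ [] ∈ M.D by simpa using M.mem_single x)
  try simp only [List.cons_append, List.nil_append, List.append_nil] at this
  exact this

lemma Pi_mul_one (x : L) : M.Pi [x, M.one] = x := by
  have := M.Pi_assoc [x] [] [] (show [x] ++ [] ++ [] ∈ M.D by simpa using M.mem_single x)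
  try simp only [List.cons_append, List.nil_append, List.append_nil] at this
  rw [M.Pi_single] at this
  exact this.symm

lemma inv_one : M.inv M.one = M.one := by
  have h1 := M.Pi_inv_pair M.one
  have h2 := M.Pi_mul_one (M.inv M.one)
  rw [h2] at h1; exact h1

section L3

variable {M}
variable {h z : L} (hz : [M.inv h, z, h] ∈ M.D)

include hz

lemma dbl_mem : [M.inv h, M.inv z, h, M.inv h, z, h] ∈ M.D := by
  have h6 : [M.inv h, M.inv z, M.inv (M.inv h), M.inv h, z, h] ∈ M.D := M.mem_inv _ hz
  rwa [M.inv_inv] at h6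

lemma inv_conj_word_mem : [M.inv h, M.inv z, h] ∈ M.D :=
  M.mem_append_left [M.inv h, M.inv z, h] [M.inv h, z, h] (dbl_mem hz)

lemma four_mem : [h, M.inv h, z, h] ∈ M.D :=
  M.mem_append_right [M.inv h, M.inv z] [h, M.inv h, z, h] (dbl_mem hz)

lemma pair_right_mem : [h, M.conj z h] ∈ M.D := by
  have := M.mem_assoc [h] [M.inv h, z, h] []
    (show [h] ++ [M.inv h, z, h] ++ [] ∈ M.D by simpa using four_mem hz)
  try simp only [List.cons_append, List.nil_append, List.append_nil] at this
  simpa [conj] using this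

lemma one_zh_mem : [M.one, z, h] ∈ M.D := by
  have := M.mem_assoc [] [h, M.inv h] [z, h] (four_mem hz)
  try simp only [List.cons_append, List.nil_append, List.append_nil] at this
  rwa [show M.Pi [h, M.inv h] = M.one from M.Pi_pair_inv h] at this

lemma mem_zh : [z, h] ∈ M.D := by
  have := M.mem_assoc [] [M.one, z] [h] (one_zh_mem hz)
  try simp only [List.cons_append, List.nil_append, List.append_nil] at this
  rwa [show M.Pi [M.one, z] = z from M.Pi_one_mul z] at this

lemma Pi_swap : M.Pi [z, h] = M.Pi [h, M.conj z h] := by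
  have e1 : M.Pi [h, M.inv h, z, h] = M.Pi [h, M.conj z h] := by
    have := M.Pi_assoc [h] [M.inv h, z, h] []
      (show [h] ++ [M.inv h, z, h] ++ [] ∈ M.D by simpa using four_mem hz)
    try simp only [List.cons_append, List.nil_append, List.append_nil] at this
    simpa [conj] using this
  have e2 : M.Pi [h, M.inv h, z, h] = M.Pi [M.one, z, h] := by
    have := M.Pi_assoc [] [h, M.inv h] [z, h] (four_mem hz)
    try simp only [List.cons_append, List.nil_append, List.append_nil] at this
    rwa [show M.Pi [h, M.inv h] = M.one from M.Pi_pair_inv h] at this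
  have e3 : M.Pi [M.one, z, h] = M.Pi [z, h] := by
    have := M.Pi_assoc [] [M.one, z] [h] (one_zh_mem hz)
    try simp only [List.cons_append, List.nil_append, List.append_nil] at this
    rwa [show M.Pi [M.one, z] = z from M.Pi_one_mul z] at this
  rw [← e3, ← e2, e1]

lemma six_mem' : [M.inv h, z, h, M.inv h, M.inv z, h] ∈ M.D := by
  have h6 : [M.inv h, M.inv (M.inv z), M.inv (M.inv h), M.inv h, M.inv z, h] ∈ M.D :=
    M.mem_inv _ (inv_conj_word_mem hz)
  rwa [M.inv_inv, M.inv_inv] at h6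

lemma five_mem : [h, M.inv h, z, h, M.inv h] ∈ M.D := by
  have t : [M.inv h, z, h, M.inv h] ∈ M.D :=
    M.mem_append_left [M.inv h, z, h, M.inv h] [M.inv z, h] (six_mem' hz)
  have e8 : [M.inv (M.inv h), M.inv h, M.inv z, M.inv (M.inv h), M.inv h, z, h, M.inv h] ∈ M.D :=
    M.mem_inv _ t
  rw [M.inv_inv] at e8
  exact M.mem_append_right [h, M.inv h, M.inv z] [h, M.inv h, z, h, M.inv h] e8

lemma mirror_mem : [M.inv (M.inv h), M.conj z h, M.inv h] ∈ M.D := by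
  rw [M.inv_inv]
  have := M.mem_assoc [h] [M.inv h, z, h] [M.inv h] (five_mem hz)
  try simp only [List.cons_append, List.nil_append, List.append_nil] at this
  simpa [conj] using this

lemma conj_cancel : M.conj (M.conj z h) (M.inv h) = z := by
  have m2 : [M.one, z, h, M.inv h] ∈ M.D := by
    have := M.mem_assoc [] [h, M.inv h] [z, h, M.inv h] (five_mem hz)
    try simp only [List.cons_append, List.nil_append, List.append_nil] at this
    rwa [show M.Pi [h, M.inv h] = M.one from M.Pi_pair_inv h] at this
  have m3 : [z, h, M.inv h] ∈ M.D := by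
    have := M.mem_assoc [] [M.one, z] [h, M.inv h] m2
    try simp only [List.cons_append, List.nil_append, List.append_nil] at this
    rwa [show M.Pi [M.one, z] = z from M.Pi_one_mul z] at this
  have q1 : M.Pi [h, M.inv h, z, h, M.inv h] = M.Pi [h, M.conj z h, M.inv h] := by
    have := M.Pi_assoc [h] [M.inv h, z, h] [M.inv h] (five_mem hz)
    try simp only [List.cons_append, List.nil_append, List.append_nil] at this
    simpa [conj] using this
  have q2 : M.Pi [h, M.inv h, z, h, M.inv h] = M.Pi [M.one, z, h, M.inv h] := by
    have := M.Pi_assoc [] [h, M.inv h] [z, h, M.inv h] (five_mem hz)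
    try simp only [List.cons_append, List.nil_append, List.append_nil] at this
    rwa [show M.Pi [h, M.inv h] = M.one from M.Pi_pair_inv h] at this
  have q3 : M.Pi [M.one, z, h, M.inv h] = M.Pi [z, h, M.inv h] := by
    have := M.Pi_assoc [] [M.one, z] [h, M.inv h] m2
    try simp only [List.cons_append, List.nil_append, List.append_nil] at this
    rwa [show M.Pi [M.one, z] = z from M.Pi_one_mul z] at this
  have q4 : M.Pi [z, h, M.inv h] = z := by
    have := M.Pi_assoc [z] [h, M.inv h] []
      (show [z] ++ [h, M.inv h] ++ [] ∈ M.D by simpa using m3)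
    try simp only [List.cons_append, List.nil_append, List.append_nil] at this
    rw [show M.Pi [h, M.inv h] = M.one from M.Pi_pair_inv h] at this
    rw [this]
    exact M.Pi_mul_one z
  show M.Pi [M.inv (M.inv h), M.conj z h, M.inv h] = z
  rw [M.inv_inv, ← q1, q2, q3, q4]

end L3

lemma pi_pair_eq_one_imp {p q : L} (hpq : [p, q] ∈ M.D) (h1 : M.Pi [p, q] = M.one) :
    q = M.inv p := by
  have m4 : [M.inv q, M.inv p, p, q] ∈ M.D := M.mem_inv [p, q] hpq
  have m3 : [M.inv p, p, q] ∈ M.D := M.mem_append_right [M.inv q] [M.inv p, p, q] m4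
  have eA : M.Pi [M.inv p, p, q] = q := by
    have := M.Pi_assoc [] [M.inv p, p] [q] m3
    try simp only [List.cons_append, List.nil_append, List.append_nil] at this
    rw [show M.Pi [M.inv p, p] = M.one from M.Pi_inv_pair p] at this
    rw [this]
    exact M.Pi_one_mul q
  have eB : M.Pi [M.inv p, p, q] = M.inv p := by
    have := M.Pi_assoc [M.inv p] [p, q] []
      (show [M.inv p] ++ [p, q] ++ [] ∈ M.D by simpa using m3)
    try simp only [List.cons_append, List.nil_append, List.append_nil] at this
    rw [h1] at this
    rw [this]
    exact M.Pi_mul_one (M.inv p)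
  rw [← eA, eB]

lemma conj_inv {h z : L} (hz : [M.inv h, z, h] ∈ M.D) :
    M.conj (M.inv z) h = M.inv (M.conj z h) := by
  -- memberships
  have h6 := dbl_mem hz
  have mA : [M.conj (M.inv z) h, M.inv h, z, h] ∈ M.D := by
    have := M.mem_assoc [] [M.inv h, M.inv z, h] [M.inv h, z, h] h6
    try simp only [List.cons_append, List.nil_append, List.append_nil] at this
    simpa [conj] using this
  have mB : [M.conj (M.inv z) h, M.conj z h] ∈ M.D := by
    have := M.mem_assoc [M.conj (M.inv z) h] [M.inv h, z, h] []
      (show [M.conj (M.inv z) h] ++ [M.inv h, z, h] ++ [] ∈ M.D by simpa using mA)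
    try simp only [List.cons_append, List.nil_append, List.append_nil] at this
    simpa [conj] using this
  -- value
  have e0 : M.Pi [M.inv h, M.inv z, h, M.inv h, z, h]
      = M.Pi [M.conj (M.inv z) h, M.inv h, z, h] := by
    have := M.Pi_assoc [] [M.inv h, M.inv z, h] [M.inv h, z, h] h6
    try simp only [List.cons_append, List.nil_append, List.append_nil] at this
    simpa [conj] using this
  have e1 : M.Pi [M.conj (M.inv z) h, M.inv h, z, h]
      = M.Pi [M.conj (M.inv z) h, M.conj z h] := by
    have := M.Pi_assoc [M.conj (M.inv z) h] [M.inv h, z, h] []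
      (show [M.conj (M.inv z) h] ++ [M.inv h, z, h] ++ [] ∈ M.D by simpa using mA)
    try simp only [List.cons_append, List.nil_append, List.append_nil] at this
    simpa [conj] using this
  -- compute LHS of e0 to one
  have m5 : [M.inv h, M.inv z, M.one, z, h] ∈ M.D := by
    have := M.mem_assoc [M.inv h, M.inv z] [h, M.inv h] [z, h] h6
    try simp only [List.cons_append, List.nil_append, List.append_nil] at this
    rwa [show M.Pi [h, M.inv h] = M.one from M.Pi_pair_inv h] at this
  have e2 : M.Pi [M.inv h, M.inv z, h, M.inv h, z, h] = M.Pi [M.inv h, M.inv z, M.one, z, h] := by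
    have := M.Pi_assoc [M.inv h, M.inv z] [h, M.inv h] [z, h] h6
    try simp only [List.cons_append, List.nil_append, List.append_nil] at this
    rwa [show M.Pi [h, M.inv h] = M.one from M.Pi_pair_inv h] at this
  have mzoz : [M.inv z, M.one, z] ∈ M.D := by
    have t1 : [M.inv z, M.one, z, h] ∈ M.D :=
      M.mem_append_right [M.inv h] [M.inv z, M.one, z, h] m5
    exact M.mem_append_left [M.inv z, M.one, z] [h] t1
  have ezoz : M.Pi [M.inv z, M.one, z] = M.one := by
    have := M.Pi_assoc [] [M.inv z, M.one] [z] mzoz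
    try simp only [List.cons_append, List.nil_append, List.append_nil] at this
    rw [show M.Pi [M.inv z, M.one] = M.inv z from M.Pi_mul_one (M.inv z)] at this
    rw [this]
    exact M.Pi_inv_pair z
  have m6 : [M.inv h, M.one, h] ∈ M.D := by
    have := M.mem_assoc [M.inv h] [M.inv z, M.one, z] [h] m5
    try simp only [List.cons_append, List.nil_append, List.append_nil] at this
    rwa [ezoz] at this
  have e3 : M.Pi [M.inv h, M.inv z, M.one, z, h] = M.Pi [M.inv h, M.one, h] := by
    have := M.Pi_assoc [M.inv h] [M.inv z, M.one, z] [h] m5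
    try simp only [List.cons_append, List.nil_append, List.append_nil] at this
    rwa [ezoz] at this
  have e4 : M.Pi [M.inv h, M.one, h] = M.one := by
    have := M.Pi_assoc [] [M.inv h, M.one] [h] m6
    try simp only [List.cons_append, List.nil_append, List.append_nil] at this
    rw [show M.Pi [M.inv h, M.one] = M.inv h from M.Pi_mul_one (M.inv h)] at this
    rw [this]
    exact M.Pi_inv_pair h
  have key : M.Pi [M.conj (M.inv z) h, M.conj z h] = M.one := by
    rw [← e1, ← e0, e2, e3, e4]
  have := M.pi_pair_eq_one_imp mB key
  rw [this, M.inv_inv]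

lemma left_cancel {p q q' : L} (h1 : [p, q] ∈ M.D) (h2 : [p, q'] ∈ M.D)
    (he : M.Pi [p, q] = M.Pi [p, q']) : q = q' := by
  have key : ∀ r : L, [p, r] ∈ M.D → r = M.Pi [M.inv p, M.Pi [p, r]] := by
    intro r hr
    have m4 : [M.inv r, M.inv p, p, r] ∈ M.D := M.mem_inv [p, r] hr
    have m3 : [M.inv p, p, r] ∈ M.D := M.mem_append_right [M.inv r] [M.inv p, p, r] m4
    have eA : M.Pi [M.inv p, p, r] = r := by
      have := M.Pi_assoc [] [M.inv p, p] [r] m3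
      try simp only [List.cons_append, List.nil_append, List.append_nil] at this
      rw [M.Pi_inv_pair p] at this
      rw [this]
      exact M.Pi_one_mul r
    have eB : M.Pi [M.inv p, p, r] = M.Pi [M.inv p, M.Pi [p, r]] := by
      have := M.Pi_assoc [M.inv p] [p, r] []
        (show [M.inv p] ++ [p, r] ++ [] ∈ M.D by simpa using m3)
      try simp only [List.cons_append, List.nil_append, List.append_nil] at this
      exact this
    exact eA.symm.trans eB
  calc q = M.Pi [M.inv p, M.Pi [p, q]] := key q h1
    _ = M.Pi [M.inv p, M.Pi [p, q']] := by rw [he]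
    _ = q' := (key q' h2).symm


lemma conj_one_mem (g : L) : [M.inv g, M.one, g] ∈ M.D := by
  have := M.mem_assoc [M.inv g] [] [g]
    (show [M.inv g] ++ [] ++ [g] ∈ M.D by simpa using M.inv_pair_mem g)
  try simp only [List.cons_append, List.nil_append, List.append_nil] at this
  exact this

lemma conj_one_eq (g : L) : M.conj M.one g = M.one := by
  show M.Pi [M.inv g, M.Pi [], g] = M.Pi []
  have := M.Pi_assoc [M.inv g] [] [g]
    (show [M.inv g] ++ [] ++ [g] ∈ M.D by simpa using M.inv_pair_mem g)
  try simp only [List.cons_append, List.nil_append, List.append_nil] at this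
  rw [← this]
  exact M.Pi_inv_pair g


lemma conj_injective {h z z' : L} (hz : [M.inv h, z, h] ∈ M.D) (hz' : [M.inv h, z', h] ∈ M.D)
    (heq : M.conj z h = M.conj z' h) : z = z' := by
  rw [← conj_cancel hz, heq, conj_cancel hz']

section ObjectiveTools

variable {M}
variable {Δ : Set (Set L)} {S : Set L}

lemma chain_of_D (hobj : M.Objective Δ) {w : List L} (hw : w ∈ M.D) :
    ∃ X, M.viaChain Δ w X := by
  rw [hobj.2.1] at hw; exact hw

lemma D_of_chain (hobj : M.Objective Δ) {w : List L} {X : Set L}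
    (h : M.viaChain Δ w X) : w ∈ M.D := by
  rw [hobj.2.1]; exact ⟨X, h⟩

lemma s_words (hobj : M.Objective Δ) (hS : S ∈ Δ) :
    ∀ w : List L, (∀ x ∈ w, x ∈ S) → w ∈ M.D := (hobj.1 S hS).2

lemma s_pi (hobj : M.Objective Δ) (hS : S ∈ Δ) {w : List L}
    (h : ∀ x ∈ w, x ∈ S) : M.Pi w ∈ S :=
  (hobj.1 S hS).1.2.2 w h (s_words hobj hS w h)

lemma s_inv (hobj : M.Objective Δ) (hS : S ∈ Δ) {x : L} (hx : x ∈ S) :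
    M.inv x ∈ S := (hobj.1 S hS).1.2.1 x hx

lemma s_one (hobj : M.Objective Δ) (hS : S ∈ Δ) : M.one ∈ S :=
  s_pi hobj hS (by simp)

lemma s_mul (hobj : M.Objective Δ) (hS : S ∈ Δ) {x y : L} (hx : x ∈ S) (hy : y ∈ S) :
    M.Pi [x, y] ∈ S := s_pi hobj hS (by simp [hx, hy])

lemma s_conj_word (hobj : M.Objective Δ) (hS : S ∈ Δ) {z t : L} (hz : z ∈ S) (ht : t ∈ S) :
    [M.inv t, z, t] ∈ M.D :=
  s_words hobj hS _ (by simp [hz, ht, s_inv hobj hS ht])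

lemma s_conj_mem (hobj : M.Objective Δ) (hS : S ∈ Δ) {z t : L} (hz : z ∈ S) (ht : t ∈ S) :
    M.conj z t ∈ S :=
  s_pi hobj hS (by simp [hz, ht, s_inv hobj hS ht])

lemma s_setConjDef (hobj : M.Objective Δ) (hS : S ∈ Δ) {X : Set L} (hX : X ⊆ S)
    {t : L} (ht : t ∈ S) : M.setConjDef X t :=
  fun x hx => s_conj_word hobj hS (hX hx) ht

lemma s_setConj_sub (hobj : M.Objective Δ) (hS : S ∈ Δ) {X : Set L} (hX : X ⊆ S)
    {t : L} (ht : t ∈ S) : M.setConj X t ⊆ S := by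
  rintro y ⟨x, hx, rfl⟩
  exact s_conj_mem hobj hS (hX hx) ht

lemma setConjDef_mirror {X : Set L} {h : L} (hdef : M.setConjDef X h) :
    M.setConjDef (M.setConj X h) (M.inv h) := by
  rintro y ⟨x, hx, rfl⟩
  exact mirror_mem (hdef x hx)

lemma setConj_mirror {X : Set L} {h : L} (hdef : M.setConjDef X h) :
    M.setConj (M.setConj X h) (M.inv h) = X := by
  ext z; constructor
  · rintro ⟨y, ⟨x, hx, rfl⟩, rfl⟩
    rw [conj_cancel (hdef x hx)]
    exact hx
  · intro hz
    exact ⟨M.conj z h, ⟨z, hz, rfl⟩, (conj_cancel (hdef z hz)).symm⟩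

lemma s_inv_pair (hobj : M.Objective Δ) (hS : S ∈ Δ) {x y : L} (hx : x ∈ S) (hy : y ∈ S) :
    M.inv (M.Pi [x, y]) = M.Pi [M.inv y, M.inv x] := by
  have hw4 : [x, y, M.inv y, M.inv x] ∈ M.D :=
    s_words hobj hS _ (by simp [hx, hy, s_inv hobj hS hx, s_inv hobj hS hy])
  have c1 : [M.Pi [x, y], M.inv y, M.inv x] ∈ M.D := by
    have := M.mem_assoc [] [x, y] [M.inv y, M.inv x] hw4
    try simp only [List.cons_append, List.nil_append, List.append_nil] at this
    exact this
  have c2 : [M.Pi [x, y], M.Pi [M.inv y, M.inv x]] ∈ M.D := by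
    have := M.mem_assoc [M.Pi [x, y]] [M.inv y, M.inv x]  []
      (show [M.Pi [x, y]] ++ [M.inv y, M.inv x] ++ [] ∈ M.D by simpa using c1)
    try simp only [List.cons_append, List.nil_append, List.append_nil] at this
    exact this
  have E1 : M.Pi [x, y, M.inv y, M.inv x] = M.Pi [M.Pi [x, y], M.inv y, M.inv x] := by
    have := M.Pi_assoc [] [x, y] [M.inv y, M.inv x] hw4
    try simp only [List.cons_append, List.nil_append, List.append_nil] at this
    exact this
  have E2 : M.Pi [M.Pi [x, y], M.inv y, M.inv x] = M.Pi [M.Pi [x,y], M.Pi [M.inv y, M.inv x]] := by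
    have := M.Pi_assoc [M.Pi [x, y]] [M.inv y, M.inv x] []
      (show [M.Pi [x, y]] ++ [M.inv y, M.inv x] ++ [] ∈ M.D by simpa using c1)
    try simp only [List.cons_append, List.nil_append, List.append_nil] at this
    exact this
  have m1 : [x, M.one, M.inv x] ∈ M.D := by
    have := M.mem_assoc [x] [y, M.inv y] [M.inv x] hw4
    try simp only [List.cons_append, List.nil_append, List.append_nil] at this
    rwa [M.Pi_pair_inv y] at this
  have E3 : M.Pi [x, y, M.inv y, M.inv x] = M.Pi [x, M.one, M.inv x] := by
    have := M.Pi_assoc [x] [y, M.inv y] [M.inv x] hw4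
    try simp only [List.cons_append, List.nil_append, List.append_nil] at this
    rwa [M.Pi_pair_inv y] at this
  have E4 : M.Pi [x, M.one, M.inv x] = M.one := by
    have := M.Pi_assoc [] [x, M.one] [M.inv x] m1
    try simp only [List.cons_append, List.nil_append, List.append_nil] at this
    rw [M.Pi_mul_one x] at this
    rw [this]
    exact M.Pi_pair_inv x
  have key : M.Pi [M.Pi [x, y], M.Pi [M.inv y, M.inv x]] = M.one := by
    rw [← E2, ← E1, E3, E4]
  exact (M.pi_pair_eq_one_imp c2 key).symm

lemma s_conj_conj (hobj : M.Objective Δ) (hS : S ∈ Δ) {x s t : L}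
    (hx : x ∈ S) (hs : s ∈ S) (ht : t ∈ S) :
    M.conj (M.conj x s) t = M.conj x (M.Pi [s, t]) := by
  have hw5 : [M.inv t, M.inv s, x, s, t] ∈ M.D :=
    s_words hobj hS _ (by simp [hx, hs, ht, s_inv hobj hS hs, s_inv hobj hS ht])
  have A1 : M.Pi [M.inv t, M.inv s, x, s, t] = M.Pi [M.inv t, M.conj x s, t] := by
    have := M.Pi_assoc [M.inv t] [M.inv s, x, s] [t] hw5
    try simp only [List.cons_append, List.nil_append, List.append_nil] at this
    exact this
  have c1 : [M.Pi [M.inv t, M.inv s], x, s, t] ∈ M.D := by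
    have := M.mem_assoc [] [M.inv t, M.inv s] [x, s, t] hw5
    try simp only [List.cons_append, List.nil_append, List.append_nil] at this
    exact this
  have A2 : M.Pi [M.inv t, M.inv s, x, s, t] = M.Pi [M.Pi [M.inv t, M.inv s], x, s, t] := by
    have := M.Pi_assoc [] [M.inv t, M.inv s] [x, s, t] hw5
    try simp only [List.cons_append, List.nil_append, List.append_nil] at this
    exact this
  have A3 : M.Pi [M.Pi [M.inv t, M.inv s], x, s, t]
      = M.Pi [M.Pi [M.inv t, M.inv s], x, M.Pi [s, t]] := by
    have := M.Pi_assoc [M.Pi [M.inv t, M.inv s], x] [s, t] []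
      (show [M.Pi [M.inv t, M.inv s], x] ++ [s, t] ++ [] ∈ M.D by simpa using c1)
    try simp only [List.cons_append, List.nil_append, List.append_nil] at this
    exact this
  show M.Pi [M.inv t, M.conj x s, t] = M.Pi [M.inv (M.Pi [s, t]), x, M.Pi [s, t]]
  rw [s_inv_pair hobj hS hs ht, ← A1, A2, A3]

lemma s_conj_pair (hobj : M.Objective Δ) (hS : S ∈ Δ) {p q t : L}
    (hp : p ∈ S) (hq : q ∈ S) (ht : t ∈ S) :
    M.Pi [M.conj p t, M.conj q t] = M.conj (M.Pi [p, q]) t := by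
  have hw6 : [M.inv t, p, t, M.inv t, q, t] ∈ M.D :=
    s_words hobj hS _ (by simp [hp, hq, ht, s_inv hobj hS ht])
  have m1 : [M.conj p t, M.inv t, q, t] ∈ M.D := by
    have := M.mem_assoc [] [M.inv t, p, t] [M.inv t, q, t] hw6
    try simp only [List.cons_append, List.nil_append, List.append_nil] at this
    exact this
  have B1 : M.Pi [M.inv t, p, t, M.inv t, q, t] = M.Pi [M.conj p t, M.inv t, q, t] := by
    have := M.Pi_assoc [] [M.inv t, p, t] [M.inv t, q, t] hw6
    try simp only [List.cons_append, List.nil_append, List.append_nil] at this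
    exact this
  have B2 : M.Pi [M.conj p t, M.inv t, q, t] = M.Pi [M.conj p t, M.conj q t] := by
    have := M.Pi_assoc [M.conj p t] [M.inv t, q, t] []
      (show [M.conj p t] ++ [M.inv t, q, t] ++ [] ∈ M.D by simpa using m1)
    try simp only [List.cons_append, List.nil_append, List.append_nil] at this
    exact this
  have m2 : [M.inv t, p, M.one, q, t] ∈ M.D := by
    have := M.mem_assoc [M.inv t, p] [t, M.inv t] [q, t] hw6
    try simp only [List.cons_append, List.nil_append, List.append_nil] at this
    rwa [M.Pi_pair_inv t] at this
  have B3 : M.Pi [M.inv t, p, t, M.inv t, q, t] = M.Pi [M.inv t, p, M.one, q, t] := by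
    have := M.Pi_assoc [M.inv t, p] [t, M.inv t] [q, t] hw6
    try simp only [List.cons_append, List.nil_append, List.append_nil] at this
    rwa [M.Pi_pair_inv t] at this
  have mpoq : [p, M.one, q] ∈ M.D := by
    have t1 : [p, M.one, q, t] ∈ M.D :=
      M.mem_append_right [M.inv t] [p, M.one, q, t] m2
    exact M.mem_append_left [p, M.one, q] [t] t1
  have epq : M.Pi [p, M.one, q] = M.Pi [p, q] := by
    have := M.Pi_assoc [] [p, M.one] [q] mpoq
    try simp only [List.cons_append, List.nil_append, List.append_nil] at this
    rwa [M.Pi_mul_one p] at this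
  have B4 : M.Pi [M.inv t, p, M.one, q, t] = M.Pi [M.inv t, M.Pi [p, q], t] := by
    have := M.Pi_assoc [M.inv t] [p, M.one, q] [t] m2
    try simp only [List.cons_append, List.nil_append, List.append_nil] at this
    rwa [epq] at this
  show M.Pi [M.conj p t, M.conj q t] = M.Pi [M.inv t, M.Pi [p, q], t]
  rw [← B2, ← B1, B3, B4]

lemma s_conj_one (hobj : M.Objective Δ) (hS : S ∈ Δ) {t : L} (ht : t ∈ S) :
    M.conj M.one t = M.one := by
  have m : [M.inv t, M.one, t] ∈ M.D :=
    s_words hobj hS _ (by simp [ht, s_one hobj hS, s_inv hobj hS ht])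
  show M.Pi [M.inv t, M.one, t] = M.one
  have := M.Pi_assoc [] [M.inv t, M.one] [t] m
  try simp only [List.cons_append, List.nil_append, List.append_nil] at this
  rw [M.Pi_mul_one (M.inv t)] at this
  rw [this]
  exact M.Pi_inv_pair t

lemma delta_conjS (hobj : M.Objective Δ) (hS : S ∈ Δ) (hsub : ∀ X ∈ Δ, X ⊆ S)
    {X : Set L} (hX : X ∈ Δ) {t : L} (ht : t ∈ S) : M.setConj X t ∈ Δ := by
  have hXgrp := hobj.1 X hX
  have hXS : X ⊆ S := hsub X hX
  have himS : M.setConj X t ⊆ S := s_setConj_sub hobj hS hXS ht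
  have hone : M.one ∈ X := hXgrp.1.2.2 [] (by simp) M.nil_mem
  have hgrp : M.IsSubgroup (M.setConj X t) := by
    refine ⟨⟨⟨M.one, M.one, hone, (s_conj_one hobj hS ht).symm⟩, ?_, ?_⟩, fun w hw => s_words hobj hS w (fun x hx => himS (hw x hx))⟩
    · rintro y ⟨x, hx, rfl⟩
      exact ⟨M.inv x, hXgrp.1.2.1 x hx, (M.conj_inv (s_conj_word hobj hS (hXS hx) ht)).symm⟩
    · intro w hw hwD
      induction w with
      | nil => exact ⟨M.one, hone, (s_conj_one hobj hS ht).symm⟩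
      | cons z u ih =>
        obtain ⟨x₀, hx₀, rfl⟩ := hw z (by simp)
        have huD : u ∈ M.D := M.mem_append_right [M.conj x₀ t] u hwD
        obtain ⟨x₁, hx₁, hpx⟩ := ih (fun x hx => hw x (by simp [hx])) huD
        have e1 : M.Pi (M.conj x₀ t :: u) = M.Pi [M.conj x₀ t, M.Pi u] := by
          have := M.Pi_assoc [M.conj x₀ t] u []
            (show [M.conj x₀ t] ++ u ++ [] ∈ M.D by simpa using hwD)
          try simp only [List.cons_append, List.nil_append, List.append_nil] at this
          exact this
        rw [e1, hpx, s_conj_pair hobj hS (hXS hx₀) (hXS hx₁) ht]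
        exact ⟨M.Pi [x₀, x₁], hXgrp.1.2.2 [x₀, x₁] (by simp [hx₀, hx₁])
          (s_words hobj hS _ (by simp [hXS hx₀, hXS hx₁])), rfl⟩
  exact hobj.2.2 X hX S hS t (s_setConjDef hobj hS hXS ht) hgrp himS
    (M.setConj X t) hgrp le_rfl himS

lemma setConj_one (hobj : M.Objective Δ) (hS : S ∈ Δ) {X : Set L} (hX : X ⊆ S) :
    M.setConj X M.one = X := by
  ext z; constructor
  · rintro ⟨x, hx, rfl⟩
    have m : [M.inv M.one, x, M.one] ∈ M.D := s_conj_word hobj hS (hX hx) (s_one hobj hS)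
    have e : M.conj x M.one = x := by
      show M.Pi [M.inv M.one, x, M.one] = x
      rw [M.inv_one] at m ⊢
      have := M.Pi_assoc [M.one] [x, M.one] []
        (show [M.one] ++ [x, M.one] ++ [] ∈ M.D by simpa using m)
      try simp only [List.cons_append, List.nil_append, List.append_nil] at this
      rw [M.Pi_mul_one x] at this
      rw [this]
      exact M.Pi_one_mul x
    rw [e]; exact hx
  · intro hz
    refine ⟨z, hz, ?_⟩
    show z = M.Pi [M.inv M.one, z, M.one]
    have m : [M.inv M.one, z, M.one] ∈ M.D := s_conj_word hobj hS (hX hz) (s_one hobj hS)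
    rw [M.inv_one] at m ⊢
    have := M.Pi_assoc [M.one] [z, M.one] []
      (show [M.one] ++ [z, M.one] ++ [] ∈ M.D by simpa using m)
    try simp only [List.cons_append, List.nil_append, List.append_nil] at this
    rw [M.Pi_mul_one z] at this
    rw [this]
    exact (M.Pi_one_mul z).symm

lemma delta_up (hobj : M.Objective Δ) (hS : S ∈ Δ) (hsub : ∀ X ∈ Δ, X ⊆ S)
    {X Z : Set L} (hX : X ∈ Δ) (hXZ : X ⊆ Z) (hZS : Z ⊆ S) (hZ : M.IsSubgroup Z) :
    Z ∈ Δ := by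
  have hXS : X ⊆ S := hsub X hX
  have h1 : M.setConj X M.one = X := setConj_one hobj hS hXS
  refine hobj.2.2 X hX S hS M.one (s_setConjDef hobj hS hXS (s_one hobj hS)) ?_ ?_ Z hZ ?_ hZS
  · rw [h1]; exact hobj.1 X hX
  · rw [h1]; exact hXS
  · rw [h1]; exact hXZ

end ObjectiveTools

section Crux

variable {M}
variable {Δ : Set (Set L)} {S : Set L}

lemma setConj_comp (hobj : M.Objective Δ) (hS : S ∈ Δ) {X : Set L} (hX : X ⊆ S)
    {s t : L} (hs : s ∈ S) (ht : t ∈ S) :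
    M.setConj (M.setConj X s) t = M.setConj X (M.Pi [s, t]) := by
  ext z; constructor
  · rintro ⟨y, ⟨x, hx, rfl⟩, rfl⟩
    exact ⟨x, hx, s_conj_conj hobj hS (hX hx) hs ht⟩
  · rintro ⟨x, hx, rfl⟩
    exact ⟨M.conj x s, ⟨x, hx, rfl⟩, (s_conj_conj hobj hS (hX hx) hs ht).symm⟩

lemma setConj_inv_cancel (hobj : M.Objective Δ) (hS : S ∈ Δ) {X : Set L} (hX : X ⊆ S)
    {t : L} (ht : t ∈ S) :
    M.setConj (M.setConj X (M.inv t)) t = X := by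
  have h := setConj_mirror (M := M) (X := X) (h := M.inv t)
    (s_setConjDef hobj hS hX (s_inv hobj hS ht))
  rwa [M.inv_inv] at h

lemma crux_mem (hobj : M.Objective Δ) (hS : S ∈ Δ) (hsub : ∀ X ∈ Δ, X ⊆ S)
    {g x y : L} (hxS : x ∈ S) (hxD : [M.inv g, x, g] ∈ M.D) (hxgS : M.conj x g ∈ S)
    (hyS : y ∈ S) (hyD : [M.inv g, y, g] ∈ M.D) (hygS : M.conj y g ∈ S) :
    [M.inv g, M.Pi [x, y], g] ∈ M.D ∧
      M.Pi [M.Pi [x, y], g] = M.Pi [g, M.Pi [M.conj x g, M.conj y g]] := by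
  -- abbreviations
  set a := M.conj x g with ha_def
  set b := M.conj y g with hb_def
  set u := M.Pi [x, y] with hu_def
  set ab := M.Pi [a, b] with hab_def
  set c := M.inv ab with hc_def
  have haS : a ∈ S := hxgS
  have hbS : b ∈ S := hygS
  have huS : u ∈ S := s_mul hobj hS hxS hyS
  have habS : ab ∈ S := s_mul hobj hS haS hbS
  have hcS : c ∈ S := s_inv hobj hS habS
  -- chains from O1
  obtain ⟨P₀, hP⟩ := chain_of_D hobj hxD
  simp only [viaChain] at hP
  obtain ⟨hP0m, hP0d, hP1m, hP1d, hP2m, hP2d, hP3m⟩ := hP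
  set P1 := M.setConj P₀ (M.inv g) with hP1_def
  set P2 := M.setConj P1 x with hP2_def
  set P3 := M.setConj P2 g with hP3_def
  obtain ⟨R₀, hR⟩ := chain_of_D hobj hyD
  simp only [viaChain] at hR
  obtain ⟨hR0m, hR0d, hR1m, hR1d, hR2m, hR2d, hR3m⟩ := hR
  set R1 := M.setConj R₀ (M.inv g) with hR1_def
  set R2 := M.setConj R1 y with hR2_def
  set R3 := M.setConj R2 g with hR3_def
  -- V = [x, y, g, c] ∈ D
  have hV : [x, y, g, c] ∈ M.D := by
    apply D_of_chain hobj (X := M.setConj R1 (M.inv x))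
    have hX0m : M.setConj R1 (M.inv x) ∈ Δ :=
      delta_conjS hobj hS hsub hR1m (s_inv hobj hS hxS)
    have eX : M.setConj (M.setConj R1 (M.inv x)) x = R1 :=
      setConj_inv_cancel hobj hS (hsub _ hR1m) hxS
    simp only [viaChain]
    refine ⟨hX0m, s_setConjDef hobj hS (hsub _ hX0m) hxS, ?_⟩
    rw [eX]
    refine ⟨hR1m, hR1d, hR2m, hR2d, hR3m, s_setConjDef hobj hS (hsub _ hR3m) hcS, ?_⟩
    exact delta_conjS hobj hS hsub hR3m hcS
  have hxyg : [x, y, g] ∈ M.D := M.mem_append_left [x, y, g] [c] hV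
  -- f2 : [x, g, b] ∈ D
  have f2 : [x, g, b] ∈ M.D := by
    apply D_of_chain hobj (X := M.setConj P2 (M.inv x))
    have hX0m : M.setConj P2 (M.inv x) ∈ Δ :=
      delta_conjS hobj hS hsub hP2m (s_inv hobj hS hxS)
    have eX : M.setConj (M.setConj P2 (M.inv x)) x = P2 :=
      setConj_inv_cancel hobj hS (hsub _ hP2m) hxS
    simp only [viaChain]
    refine ⟨hX0m, s_setConjDef hobj hS (hsub _ hX0m) hxS, ?_⟩
    rw [eX]
    refine ⟨hP2m, hP2d, hP3m, s_setConjDef hobj hS (hsub _ hP3m) hbS, ?_⟩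
    exact delta_conjS hobj hS hsub hP3m hbS
  -- f3 : [g, a, b] ∈ D
  have f3 : [g, a, b] ∈ M.D := by
    apply D_of_chain hobj (X := P2)
    simp only [viaChain]
    refine ⟨hP2m, hP2d, hP3m, s_setConjDef hobj hS (hsub _ hP3m) haS, ?_, ?_, ?_⟩
    · exact delta_conjS hobj hS hsub hP3m haS
    · exact s_setConjDef hobj hS (hsub _ (delta_conjS hobj hS hsub hP3m haS)) hbS
    · exact delta_conjS hobj hS hsub (delta_conjS hobj hS hsub hP3m haS) hbS
  -- f4 : [g, ab, c] ∈ D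
  have f4 : [g, ab, c] ∈ M.D := by
    apply D_of_chain hobj (X := P2)
    simp only [viaChain]
    refine ⟨hP2m, hP2d, hP3m, s_setConjDef hobj hS (hsub _ hP3m) habS, ?_, ?_, ?_⟩
    · exact delta_conjS hobj hS hsub hP3m habS
    · exact s_setConjDef hobj hS (hsub _ (delta_conjS hobj hS hsub hP3m habS)) hcS
    · exact delta_conjS hobj hS hsub (delta_conjS hobj hS hsub hP3m habS) hcS
  -- the identity Pi [x,y,g] = Pi [g, ab]
  have ss1 : M.Pi [y, g] = M.Pi [g, b] := Pi_swap hyD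
  have ss2 : M.Pi [x, g] = M.Pi [g, a] := Pi_swap hxD
  have v1 : M.Pi [x, y, g] = M.Pi [x, M.Pi [y, g]] := by
    have := M.Pi_assoc [x] [y, g] []
      (show [x] ++ [y, g] ++ [] ∈ M.D by simpa using hxyg)
    try simp only [List.cons_append, List.nil_append, List.append_nil] at this
    exact this
  have v3 : M.Pi [x, g, b] = M.Pi [x, M.Pi [g, b]] := by
    have := M.Pi_assoc [x] [g, b] []
      (show [x] ++ [g, b] ++ [] ∈ M.D by simpa using f2)
    try simp only [List.cons_append, List.nil_append, List.append_nil] at this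
    exact this
  have v4 : M.Pi [x, g, b] = M.Pi [M.Pi [x, g], b] := by
    have := M.Pi_assoc [] [x, g] [b] f2
    try simp only [List.cons_append, List.nil_append, List.append_nil] at this
    exact this
  have v6 : M.Pi [g, a, b] = M.Pi [M.Pi [g, a], b] := by
    have := M.Pi_assoc [] [g, a] [b] f3
    try simp only [List.cons_append, List.nil_append, List.append_nil] at this
    exact this
  have v7 : M.Pi [g, a, b] = M.Pi [g, ab] := by
    have := M.Pi_assoc [g] [a, b] []
      (show [g] ++ [a, b] ++ [] ∈ M.D by simpa using f3)
    try simp only [List.cons_append, List.nil_append, List.append_nil] at this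
    exact this
  have mB : M.Pi [x, y, g] = M.Pi [g, ab] := by
    rw [v1, ss1, ← v3, v4, ss2, ← v6, v7]
  have mA : M.Pi [x, y, g] = M.Pi [u, g] := by
    have := M.Pi_assoc [] [x, y] [g] hxyg
    try simp only [List.cons_append, List.nil_append, List.append_nil] at this
    exact this
  -- Pi V = g
  have hPiV : M.Pi [x, y, g, c] = g := by
    have w1 : M.Pi [x, y, g, c] = M.Pi [M.Pi [x, y, g], c] := by
      have := M.Pi_assoc [] [x, y, g] [c] hV
      try simp only [List.cons_append, List.nil_append, List.append_nil] at this
      exact this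
    have w2 : M.Pi [g, ab, c] = M.Pi [M.Pi [g, ab], c] := by
      have := M.Pi_assoc [] [g, ab] [c] f4
      try simp only [List.cons_append, List.nil_append, List.append_nil] at this
      exact this
    have w3 : M.Pi [g, ab, c] = M.Pi [g, M.Pi [ab, c]] := by
      have := M.Pi_assoc [g] [ab, c] []
        (show [g] ++ [ab, c] ++ [] ∈ M.D by simpa using f4)
      try simp only [List.cons_append, List.nil_append, List.append_nil] at this
      exact this
    have w4 : M.Pi [ab, c] = M.one := by
      rw [hc_def]; exact M.Pi_pair_inv ab
    rw [w1, mB, ← w2, w3, w4]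
    exact M.Pi_mul_one g
  -- Omega and contraction
  have hΩ : [M.inv c, M.inv g, M.inv y, M.inv x, x, y, g, c] ∈ M.D := M.mem_inv _ hV
  have hinvc : M.inv c = ab := by rw [hc_def, M.inv_inv]
  rw [hinvc] at hΩ
  have hK : [ab, M.inv g, M.inv y, M.inv x, g] ∈ M.D := by
    have := M.mem_assoc [ab, M.inv g, M.inv y, M.inv x] [x, y, g, c] []
      (show [ab, M.inv g, M.inv y, M.inv x] ++ [x, y, g, c] ++ [] ∈ M.D by simpa using hΩ)
    try simp only [List.cons_append, List.nil_append, List.append_nil] at this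
    rwa [hPiV] at this
  -- extract chain of hK
  obtain ⟨T₀, hT⟩ := chain_of_D hobj hK
  simp only [viaChain] at hT
  obtain ⟨hT0m, hT0d, hT1m, hT1d, hT2m, hT2d, hT3m, hT3d, hT4m, hT4d, hT5m⟩ := hT
  set T1 := M.setConj T₀ ab with hT1_def
  set T2 := M.setConj T1 (M.inv g) with hT2_def
  set T3 := M.setConj T2 (M.inv y) with hT3_def
  set T4 := M.setConj T3 (M.inv x) with hT4_def
  -- T2 has g-data
  have hT2gd : M.setConjDef T2 g := by
    have := setConjDef_mirror (M := M) hT1d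
    rwa [M.inv_inv] at this
  have hT2g : M.setConj T2 g = T1 := by
    have := setConj_mirror (M := M) hT1d
    rwa [M.inv_inv] at this
  -- T4 = setConj T2 (inv u) and setConj T4 u = T2
  have hT4e : T4 = M.setConj T2 (M.inv u) := by
    rw [hT4_def, hT3_def,
      setConj_comp hobj hS (hsub _ hT2m) (s_inv hobj hS hyS) (s_inv hobj hS hxS)]
    congr 1
    rw [hu_def, s_inv_pair hobj hS hxS hyS]
  have hT4u : M.setConj T4 u = T2 := by
    rw [hT4e]
    exact setConj_inv_cancel hobj hS (hsub _ hT2m) huS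
  -- final chain for [inv g, u, g]
  have hmem : [M.inv g, u, g] ∈ M.D := by
    apply D_of_chain hobj (X := M.setConj T4 g)
    simp only [viaChain]
    refine ⟨hT5m, setConjDef_mirror (M := M) hT4d, ?_⟩
    rw [setConj_mirror (M := M) hT4d]
    refine ⟨hT4m, s_setConjDef hobj hS (hsub _ hT4m) huS, ?_⟩
    rw [hT4u]
    refine ⟨hT2m, hT2gd, ?_⟩
    rw [hT2g]
    exact hT1m
  exact ⟨hmem, by rw [← mA, mB]⟩

lemma crux (hobj : M.Objective Δ) (hS : S ∈ Δ) (hsub : ∀ X ∈ Δ, X ⊆ S)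
    {g x y : L} (hxS : x ∈ S) (hxD : [M.inv g, x, g] ∈ M.D) (hxgS : M.conj x g ∈ S)
    (hyS : y ∈ S) (hyD : [M.inv g, y, g] ∈ M.D) (hygS : M.conj y g ∈ S) :
    [M.inv g, M.Pi [x, y], g] ∈ M.D ∧
      M.conj (M.Pi [x, y]) g = M.Pi [M.conj x g, M.conj y g] := by
  obtain ⟨hmem, _⟩ := crux_mem hobj hS hsub hxS hxD hxgS hyS hyD hygS
  refine ⟨hmem, ?_⟩
  set a := M.conj x g with ha_def
  set b := M.conj y g with hb_def
  set u := M.Pi [x, y] with hu_def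
  set ab := M.Pi [a, b] with hab_def
  -- mirror data
  have haD' : [M.inv (M.inv g), a, M.inv g] ∈ M.D := mirror_mem hxD
  have hbD' : [M.inv (M.inv g), b, M.inv g] ∈ M.D := mirror_mem hyD
  have hacan : M.conj a (M.inv g) = x := conj_cancel hxD
  have hbcan : M.conj b (M.inv g) = y := conj_cancel hyD
  have hmir := crux_mem hobj hS hsub (g := M.inv g) hxgS haD'
    (by rw [hacan]; exact hxS) hygS hbD' (by rw [hbcan]; exact hyS)
  obtain ⟨habD', hId⟩ := hmir
  -- hId : Pi [ab, inv g] = Pi [inv g, Pi [conj a (inv g), conj b (inv g)]]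
  rw [hacan, hbcan] at hId
  -- Pi_swap on ab at inv g : Pi [ab, inv g] = Pi [inv g, conj ab (inv g)]
  have hsw : M.Pi [ab, M.inv g] = M.Pi [M.inv g, M.conj ab (M.inv g)] := Pi_swap habD'
  have heq : M.Pi [M.inv g, M.conj ab (M.inv g)] = M.Pi [M.inv g, u] := by
    rw [← hsw, hId, ← hu_def]
  -- left cancel
  have hm1 : [M.inv g, M.conj ab (M.inv g)] ∈ M.D := pair_right_mem habD'
  have hm2 : [M.inv g, u] ∈ M.D := M.mem_append_left [M.inv g, u] [g] hmem
  have hcan : M.conj ab (M.inv g) = u := M.left_cancel hm1 hm2 heq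
  -- injectivity
  have hhu : [M.inv (M.inv g), M.conj u g, M.inv g] ∈ M.D := mirror_mem hmem
  have e1 : M.conj (M.conj u g) (M.inv g) = u := conj_cancel hmem
  exact M.conj_injective hhu habD' (e1.trans hcan.symm)

end Crux

section Finale

variable {M}
variable {Δ : Set (Set L)} {S : Set L}

lemma Sw_sub : ∀ w : List L, M.Sw S w ⊆ S := by
  intro w
  cases w with
  | nil => exact fun x hx => hx
  | cons g w => exact fun x hx => hx.1

lemma one_mem_Sw (hobj : M.Objective Δ) (hS : S ∈ Δ) :
    ∀ w : List L, M.one ∈ M.Sw S w := by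
  intro w
  induction w with
  | nil => exact s_one hobj hS
  | cons g w ih =>
    exact ⟨s_one hobj hS, M.conj_one_mem g, by rw [M.conj_one_eq g]; exact ih⟩

lemma inv_mem_Sw (hobj : M.Objective Δ) (hS : S ∈ Δ) :
    ∀ w : List L, ∀ x ∈ M.Sw S w, M.inv x ∈ M.Sw S w := by
  intro w
  induction w with
  | nil => exact fun x hx => s_inv hobj hS hx
  | cons g w ih =>
    rintro x ⟨h1, h2, h3⟩
    exact ⟨s_inv hobj hS h1, inv_conj_word_mem h2,
      by rw [M.conj_inv h2]; exact ih _ h3⟩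

lemma mul_mem_Sw (hobj : M.Objective Δ) (hS : S ∈ Δ) (hsub : ∀ X ∈ Δ, X ⊆ S) :
    ∀ w : List L, ∀ x ∈ M.Sw S w, ∀ y ∈ M.Sw S w, M.Pi [x, y] ∈ M.Sw S w := by
  intro w
  induction w with
  | nil => exact fun x hx y hy => s_mul hobj hS hx hy
  | cons g w ih =>
    rintro x ⟨hx1, hx2, hx3⟩ y ⟨hy1, hy2, hy3⟩
    have hxgS : M.conj x g ∈ S := Sw_sub w hx3
    have hygS : M.conj y g ∈ S := Sw_sub w hy3
    obtain ⟨hD, hVal⟩ := crux hobj hS hsub hx1 hx2 hxgS hy1 hy2 hygS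
    exact ⟨s_mul hobj hS hx1 hy1, hD, by rw [hVal]; exact ih _ hx3 _ hy3⟩

lemma pi_mem_Sw (hobj : M.Objective Δ) (hS : S ∈ Δ) (hsub : ∀ X ∈ Δ, X ⊆ S)
    (w : List L) : ∀ u : List L, (∀ z ∈ u, z ∈ M.Sw S w) → u ∈ M.D →
    M.Pi u ∈ M.Sw S w := by
  intro u
  induction u with
  | nil => exact fun _ _ => one_mem_Sw hobj hS w
  | cons z u ih =>
    intro hN hD
    have hz := hN z (by simp)
    have hu : u ∈ M.D := M.mem_append_right [z] u hD
    have hPu := ih (fun t ht => hN t (by simp [ht])) hu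
    have e : M.Pi (z :: u) = M.Pi [z, M.Pi u] := by
      have := M.Pi_assoc [z] u [] (show [z] ++ u ++ [] ∈ M.D by simpa using hD)
      try simp only [List.cons_append, List.nil_append, List.append_nil] at this
      exact this
    rw [e]
    exact mul_mem_Sw hobj hS hsub w z hz (M.Pi u) hPu

lemma Sw_subgroup (hobj : M.Objective Δ) (hS : S ∈ Δ) (hsub : ∀ X ∈ Δ, X ⊆ S)
    (w : List L) : M.IsSubgroup (M.Sw S w) :=
  ⟨⟨⟨M.one, one_mem_Sw hobj hS w⟩, fun x hx => inv_mem_Sw hobj hS w x hx,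
    fun u hu hD => pi_mem_Sw hobj hS hsub w u hu hD⟩,
   fun u hu => s_words hobj hS u (fun x hx => Sw_sub w (hu x hx))⟩

lemma master (hobj : M.Objective Δ) (hS : S ∈ Δ) (hsub : ∀ X ∈ Δ, X ⊆ S)
    {Q : Set L} (hQ : Q ∈ Δ) {g : L} (hdef : M.setConjDef Q g)
    (him : M.setConj Q g ⊆ S) : M.setConj Q g ∈ Δ := by
  have hQgrp := hobj.1 Q hQ
  have hQS : Q ⊆ S := hsub Q hQ
  have honeQ : M.one ∈ Q := hQgrp.1.2.2 [] (by simp) M.nil_mem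
  have hgrp : M.IsSubgroup (M.setConj Q g) := by
    refine ⟨⟨⟨M.one, M.one, honeQ, (M.conj_one_eq g).symm⟩, ?_, ?_⟩,
      fun u hu => s_words hobj hS u (fun x hx => him (hu x hx))⟩
    · rintro y ⟨q, hq, rfl⟩
      exact ⟨M.inv q, hQgrp.1.2.1 q hq, (M.conj_inv (hdef q hq)).symm⟩
    · intro u hu huD
      induction u with
      | nil => exact ⟨M.one, honeQ, (M.conj_one_eq g).symm⟩
      | cons z u ih =>
        obtain ⟨q₀, hq₀, rfl⟩ := hu z (by simp)
        have huD' : u ∈ M.D := M.mem_append_right [M.conj q₀ g] u huD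
        obtain ⟨q₁, hq₁, hpx⟩ := ih (fun t ht => hu t (by simp [ht])) huD'
        have e : M.Pi (M.conj q₀ g :: u) = M.Pi [M.conj q₀ g, M.Pi u] := by
          have := M.Pi_assoc [M.conj q₀ g] u []
            (show [M.conj q₀ g] ++ u ++ [] ∈ M.D by simpa using huD)
          try simp only [List.cons_append, List.nil_append, List.append_nil] at this
          exact this
        have hpair := (crux hobj hS hsub (hQS hq₀) (hdef q₀ hq₀) (him ⟨q₀, hq₀, rfl⟩)
          (hQS hq₁) (hdef q₁ hq₁) (him ⟨q₁, hq₁, rfl⟩)).2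
        rw [e, hpx, ← hpair]
        refine ⟨M.Pi [q₀, q₁], hQgrp.1.2.2 [q₀, q₁] (by simp [hq₀, hq₁])
          (s_words hobj hS _ (by simp [hQS hq₀, hQS hq₁])), rfl⟩
  exact hobj.2.2 Q hQ S hS g hdef hgrp him (M.setConj Q g) hgrp le_rfl him

lemma chain_of_sub (hobj : M.Objective Δ) (hS : S ∈ Δ) (hsub : ∀ X ∈ Δ, X ⊆ S) :
    ∀ w : List L, ∀ Q : Set L, Q ∈ Δ → Q ⊆ M.Sw S w → M.viaChain Δ w Q := by
  intro w
  induction w with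
  | nil => intro Q hQ _; simpa [viaChain] using hQ
  | cons g w ih =>
    intro Q hQ hQsub
    have hdef : M.setConjDef Q g := fun q hq => (hQsub hq).2.1
    have himSw : M.setConj Q g ⊆ M.Sw S w := by
      rintro y ⟨q, hq, rfl⟩; exact (hQsub hq).2.2
    have himS : M.setConj Q g ⊆ S := fun y hy => Sw_sub w (himSw hy)
    have himΔ : M.setConj Q g ∈ Δ := master hobj hS hsub hQ hdef himS
    exact ⟨hQ, hdef, ih _ himΔ himSw⟩

lemma sub_of_chain (hobj : M.Objective Δ) (hS : S ∈ Δ) (hsub : ∀ X ∈ Δ, X ⊆ S) :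
    ∀ w : List L, ∀ X : Set L, M.viaChain Δ w X → X ⊆ M.Sw S w := by
  intro w
  induction w with
  | nil =>
    intro X hX
    exact hsub X hX
  | cons g w ih =>
    intro X hX
    obtain ⟨hXm, hXd, hchain⟩ := hX
    intro x hx
    exact ⟨hsub X hXm hx, hXd x hx, ih _ hchain ⟨x, hx, rfl⟩⟩

lemma chain_head {w : List L} {X : Set L} (h : M.viaChain Δ w X) : X ∈ Δ := by
  cases w with
  | nil => exact h
  | cons g w => exact h.1

end Finale

end PartialGroupOn

theorem Sw_subgroup_and_mem_iff (M : PartialGroupOn L) (Δ : Set (Set L))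
    (S : Set L) (hobj : M.Objective Δ) (hS : S ∈ Δ) (hsub : ∀ X ∈ Δ, X ⊆ S)
    (w : List L) :
    M.IsSubgroup (M.Sw S w) ∧ M.Sw S w ⊆ S ∧ (M.Sw S w ∈ Δ ↔ w ∈ M.D) := by
  refine ⟨Sw_subgroup hobj hS hsub w, Sw_sub w, ?_, ?_⟩
  · intro hin
    exact D_of_chain hobj (chain_of_sub hobj hS hsub w _ hin (fun x hx => hx))
  · intro hw
    obtain ⟨X, hchain⟩ := chain_of_D hobj hw
    exact delta_up hobj hS hsub (chain_head hchain)
      (sub_of_chain hobj hS hsub w X hchain) (Sw_sub w)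
      (Sw_subgroup hobj hS hsub w)
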